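/- Let n, T be positive integers, ε = 1/(16nT), and for each i ∈ [n] let v_i, v*_i ∈ {1,…,T+1} with v_i ≥ v*_i/(T+1). For each integer d with 2 ≤ d ≤ ⌈log₂(T+1)⌉, let X_{2^d} = {i : v*_i/(2^{d+1}(2.25+ε)) ≤ v_i < v*_i/(2^d(2.25+ε))}, and suppose |X_{2^d}| ≤ n/2^d for all such d. Then (∏_{i=1}^n v_i / ∏_{i=1}^n v*_i)^{1/n} ≥ 1/(18 + 8ε). -/

import Mathlib

lemma geom_aux (D : ℕ) : ∑ d ∈ Finset.Icc 2 D, ((d:ℝ)-1)/2^d = 1 - (D+1)/2^D := by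
  induction D with
  | zero => simp [Finset.Icc_eq_empty]
  | succ m ih =>
    rcases Nat.eq_zero_or_pos m with hm | hm
    · subst hm; simp [show Finset.Icc 2 1 = ∅ from rfl]
    · rw [Finset.sum_Icc_succ_top (by omega), ih]
      have : (2:ℝ)^m ≠ 0 := by positivity
      push_cast
      field_simp
      ring

theorem approx_ratio_bound (n T : ℕ) (hn : 0 < n) (hT : 0 < T)
    (ε : ℝ) (hε : ε = 1 / (16 * n * T))
    (v vstar : Fin n → ℕ)
    (hv : ∀ i, 1 ≤ v i ∧ v i ≤ T + 1)
    (hvstar : ∀ i, 1 ≤ vstar i ∧ vstar i ≤ T + 1)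
    (hratio : ∀ i, (v i : ℝ) ≥ (vstar i : ℝ) / (T + 1))
    (hX : ∀ d : ℕ, 2 ≤ d → d ≤ Nat.clog 2 (T + 1) →
      ((Finset.univ.filter fun i : Fin n =>
          (vstar i : ℝ) / (2 ^ (d + 1) * (2.25 + ε)) ≤ (v i : ℝ) ∧
          (v i : ℝ) < (vstar i : ℝ) / (2 ^ d * (2.25 + ε))).card : ℝ)
        ≤ n / 2 ^ d) :
    ((∏ i, (v i : ℝ)) / ∏ i, (vstar i : ℝ)) ^ ((1 : ℝ) / n) ≥
      1 / (18 + 8 * ε) := by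
  classical
  have hε0 : 0 < ε := by rw [hε]; positivity
  set c : ℝ := 2.25 + ε with hcdef
  have hc0 : (0:ℝ) < c := by rw [hcdef]; positivity
  have hc2 : (2:ℝ) < c := by rw [hcdef]; norm_num; linarith
  set D := Nat.clog 2 (T + 1) with hD
  have hv0 : ∀ i, (0:ℝ) < v i := fun i => by exact_mod_cast (hv i).1
  have hv1 : ∀ i, (1:ℝ) ≤ v i := fun i => by exact_mod_cast (hv i).1
  have hvs0 : ∀ i, (0:ℝ) < vstar i := fun i => by exact_mod_cast (hvstar i).1
  have hTD : T + 1 ≤ 2 ^ D := Nat.le_pow_clog (by norm_num) _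
  -- covering lemma
  have cover : ∀ i : Fin n, (v i : ℝ) < (vstar i : ℝ) / (2 ^ 2 * c) →
      ∃ d, 2 ≤ d ∧ d ≤ D ∧
        ((vstar i : ℝ) / (2 ^ (d + 1) * c) ≤ (v i : ℝ) ∧
          (v i : ℝ) < (vstar i : ℝ) / (2 ^ d * c)) := by
    intro i hi
    have h1 : (4:ℝ) * c < T + 1 := by
      have h2 := hratio i
      have h3 : (vstar i : ℝ) / (T + 1) < (vstar i : ℝ) / (2 ^ 2 * c) := lt_of_le_of_lt h2 hi
      have h4 : (0:ℝ) < T + 1 := by positivity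
      rw [div_lt_div_iff₀ h4 (by positivity)] at h3
      nlinarith [hvs0 i]
    have hT9 : 10 ≤ T + 1 := by
      by_contra h
      push_neg at h
      have h9 : ((T:ℝ) + 1) ≤ 9 := by
        have : T + 1 ≤ 9 := by omega
        exact_mod_cast this
      rw [hcdef] at h1
      linarith
    have hD2 : 2 ≤ D := by
      by_contra h
      push_neg at h
      have : 2 ^ D ≤ 2 ^ 1 := Nat.pow_le_pow_right (by norm_num) (by omega)
      omega
    have hwit : (vstar i : ℝ) / (2 ^ (D - 2 + 3) * c) ≤ v i := by
      have hk3 : D - 2 + 3 = D + 1 := by omega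
      rw [hk3]
      have hvsle : (vstar i : ℝ) ≤ 2 ^ (D + 1) * c := by
        have h5 : (vstar i : ℝ) ≤ 2 ^ D := by
          calc (vstar i : ℝ) ≤ T + 1 := by exact_mod_cast (hvstar i).2
          _ ≤ 2 ^ D := by exact_mod_cast hTD
        have h6 : (2:ℝ) ^ D ≤ 2 ^ (D + 1) := by
          apply pow_le_pow_right₀ (by norm_num); omega
        nlinarith [pow_pos (by norm_num : (0:ℝ) < 2) (D+1)]
      calc (vstar i : ℝ) / (2 ^ (D + 1) * c) ≤ 1 :=
            (div_le_one (by positivity)).mpr hvsle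
        _ ≤ v i := hv1 i
    have hex : ∃ k, (vstar i : ℝ) / (2 ^ (k + 3) * c) ≤ v i := ⟨D - 2, hwit⟩
    have hspec : (vstar i : ℝ) / (2 ^ (Nat.find hex + 3) * c) ≤ v i := Nat.find_spec hex
    have hkle : Nat.find hex ≤ D - 2 := Nat.find_le hwit
    refine ⟨Nat.find hex + 2, by omega, by omega, ?_, ?_⟩
    · have h7 : Nat.find hex + 2 + 1 = Nat.find hex + 3 := by omega
      rw [h7]; exact hspec
    · rcases Nat.eq_zero_or_pos (Nat.find hex) with h0 | h0
      · rw [h0]; exact hi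
      · have hnot := Nat.find_min hex (m := Nat.find hex - 1) (by omega)
        push_neg at hnot
        have h8 : Nat.find hex - 1 + 3 = Nat.find hex + 2 := by omega
        rwa [h8] at hnot
  -- choose bucket function
  choose! F hF using cover
  set S : Finset (Fin n) :=
    Finset.univ.filter (fun i => (v i : ℝ) < (vstar i : ℝ) / (2 ^ 2 * c)) with hS
  set e : Fin n → ℕ :=
    fun i => if (v i : ℝ) < (vstar i : ℝ) / (2 ^ 2 * c) then F i - 1 else 0 with he
  -- per-agent bound
  have key : ∀ i, 1/(4*c) * (1/2:ℝ)^(e i) ≤ (v i : ℝ) / vstar i := by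
    intro i
    by_cases hi : (v i : ℝ) < (vstar i : ℝ) / (2 ^ 2 * c)
    · obtain ⟨hd2, hdD, hlow, hup⟩ := hF i hi
      have hei : e i = F i - 1 := by simp only [he]; rw [if_pos hi]
      rw [hei]
      have hexp : 1/(4*c) * (1/2:ℝ)^(F i - 1) = 1/(2^(F i + 1) * c) := by
        rw [div_pow, one_pow, div_mul_div_comm, one_mul]
        congr 1
        have h9 : F i + 1 = (F i - 1) + 2 := by omega
        rw [h9, pow_add]
        ring
      rw [hexp]
      rw [div_le_div_iff₀ (by positivity) (hvs0 i)]
      rw [div_le_iff₀ (by positivity)] at hlow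
      linarith
    · have hei : e i = 0 := by simp only [he]; rw [if_neg hi]
      rw [hei, pow_zero, mul_one]
      push_neg at hi
      rw [div_le_iff₀ (by positivity)] at hi
      rw [div_le_div_iff₀ (by positivity) (hvs0 i)]
      nlinarith
  -- counting
  have hmaps : ∀ i ∈ S, F i ∈ Finset.Icc 2 D := by
    intro i hi
    rw [hS, Finset.mem_filter] at hi
    obtain ⟨h2, h3, _, _⟩ := hF i hi.2
    exact Finset.mem_Icc.mpr ⟨h2, h3⟩
  have h1 : ∑ i, e i = ∑ i ∈ S, (F i - 1) := by
    rw [← Finset.sum_subset (Finset.subset_univ S) (fun i _ hiS => by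
      simp only [he]
      rw [if_neg]
      intro hcon
      exact hiS (by rw [hS, Finset.mem_filter]; exact ⟨Finset.mem_univ i, hcon⟩))]
    apply Finset.sum_congr rfl
    intro i hi
    rw [hS, Finset.mem_filter] at hi
    simp only [he]
    rw [if_pos hi.2]
  have hfib : ∑ i ∈ S, (F i - 1) =
      ∑ d ∈ Finset.Icc 2 D, ∑ i ∈ S.filter (fun i => F i = d), (F i - 1) :=
    (Finset.sum_fiberwise_of_maps_to hmaps _).symm
  have hinner : ∀ d ∈ Finset.Icc 2 D,
      ∑ i ∈ S.filter (fun i => F i = d), (F i - 1) =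
        (S.filter (fun i => F i = d)).card * (d - 1) := by
    intro d _
    rw [Finset.sum_congr rfl (fun i hi => by
      rw [(Finset.mem_filter.mp hi).2]), Finset.sum_const, smul_eq_mul]
  have hcard : ∀ d, 2 ≤ d → d ≤ D →
      ((S.filter (fun i => F i = d)).card : ℝ) ≤ n / 2 ^ d := by
    intro d hd2 hdD
    refine le_trans ?_ (hX d hd2 hdD)
    have hsub : S.filter (fun i => F i = d) ⊆
        Finset.univ.filter (fun i : Fin n =>
          (vstar i : ℝ) / (2 ^ (d + 1) * c) ≤ (v i : ℝ) ∧
          (v i : ℝ) < (vstar i : ℝ) / (2 ^ d * c)) := by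
      intro i hi
      rw [Finset.mem_filter] at hi
      have hiS := hi.1
      rw [hS, Finset.mem_filter] at hiS
      obtain ⟨_, _, hlow, hup⟩ := hF i hiS.2
      rw [Finset.mem_filter]
      refine ⟨Finset.mem_univ i, ?_, ?_⟩
      · rw [← hi.2]; exact hlow
      · rw [← hi.2]; exact hup
    exact_mod_cast Nat.cast_le.mpr (Finset.card_le_card hsub)
  have hterm : ∀ d ∈ Finset.Icc 2 D,
      (((S.filter (fun i => F i = d)).card * (d - 1) : ℕ) : ℝ) ≤
        (n / 2 ^ d) * ((d:ℝ) - 1) := by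
    intro d hd
    rw [Finset.mem_Icc] at hd
    have h1d : 1 ≤ d := by omega
    rw [Nat.cast_mul, Nat.cast_sub h1d, Nat.cast_one]
    apply mul_le_mul_of_nonneg_right (hcard d hd.1 hd.2)
    have : (2:ℝ) ≤ d := by exact_mod_cast hd.1
    linarith
  have hsumR : ((∑ i, e i : ℕ) : ℝ) ≤ n := by
    rw [h1, hfib, Finset.sum_congr rfl hinner, Nat.cast_sum]
    calc ∑ d ∈ Finset.Icc 2 D,
          (((S.filter (fun i => F i = d)).card * (d - 1) : ℕ) : ℝ)
        ≤ ∑ d ∈ Finset.Icc 2 D, (n / 2 ^ d) * ((d:ℝ) - 1) :=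
          Finset.sum_le_sum hterm
      _ = n * ∑ d ∈ Finset.Icc 2 D, ((d:ℝ) - 1) / 2 ^ d := by
          rw [Finset.mul_sum]
          apply Finset.sum_congr rfl
          intro d _
          ring
      _ ≤ n * 1 := by
          apply mul_le_mul_of_nonneg_left _ (by positivity)
          rw [geom_aux D]
          have : (0:ℝ) ≤ (D + 1) / 2 ^ D := by positivity
          linarith
      _ = n := mul_one _
  have hsum : ∑ i, e i ≤ n := by exact_mod_cast hsumR
  -- assemble the product bound
  have h8c : 1 / (18 + 8 * ε) = 1/(4*c) * (1/2:ℝ) := by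
    rw [hcdef]
    have h9 : (18:ℝ) + 8 * ε ≠ 0 := by positivity
    have h10 : (2.25:ℝ) + ε ≠ 0 := by positivity
    field_simp
    ring
  have hprod : (1 / (18 + 8 * ε)) ^ n ≤ ∏ i, ((v i : ℝ) / vstar i) := by
    rw [h8c, mul_pow]
    calc (1/(4*c))^n * ((1/2:ℝ))^n ≤ (1/(4*c))^n * (1/2:ℝ)^(∑ i, e i) := by
          apply mul_le_mul_of_nonneg_left _ (by positivity)
          exact pow_le_pow_of_le_one (by norm_num) (by norm_num) hsum
      _ = ∏ i, (1/(4*c) * (1/2:ℝ)^(e i)) := by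
          rw [Finset.prod_mul_distrib, Finset.prod_const, Finset.card_univ,
            Fintype.card_fin, Finset.prod_pow_eq_pow_sum]
      _ ≤ ∏ i, ((v i : ℝ) / vstar i) := by
          apply Finset.prod_le_prod
          · intro i _; positivity
          · intro i _; exact key i
  -- final rpow manipulation
  rw [ge_iff_le]
  have ha : (0:ℝ) < 1 / (18 + 8 * ε) := by positivity
  have hPn : (∏ i, (v i : ℝ)) / ∏ i, (vstar i : ℝ) = ∏ i, ((v i : ℝ) / vstar i) :=
    (Finset.prod_div_distrib _ _).symm
  rw [hPn]
  have hn' : (n:ℝ) ≠ 0 := Nat.cast_ne_zero.mpr hn.ne'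
  calc 1 / (18 + 8 * ε)
      = ((1 / (18 + 8 * ε)) ^ n) ^ ((1:ℝ)/n) := by
        rw [← Real.rpow_natCast (1 / (18 + 8 * ε)) n, ← Real.rpow_mul ha.le,
          mul_one_div, div_self hn', Real.rpow_one]
    _ ≤ (∏ i, ((v i : ℝ) / vstar i)) ^ ((1:ℝ)/n) :=
        Real.rpow_le_rpow (by positivity) hprod (by positivity)
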